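/- Let p ≥ 1 and n ≥ 1 be integers and let ℓ₁, …, ℓ_p be nonnegative integers with ℓ₁ + ⋯ + ℓ_p = p − n. Then the number of permutations π of {1, …, p} such that for every k with 1 ≤ k ≤ p−1 one has Σ_{i=1}^{k} ℓ_{π(i)} > k − n, is equal to n·(p−1)!. (Such orderings are exactly the depth-first degree sequences of plane forests with n trees on p vertices in which the i-th vertex has ℓ_i children; so this counts the plane forests with n trees on a given labelled vertex set with prescribed numbers of children, the key count in the enumeration of bicoloured excursion forests.) -/
import Mathlib

open scoped BigOperators
open Finset

namespace VEP

/-- Partial sums of `c`. -/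
def S (c : ℕ → ℤ) : ℕ → ℤ
  | 0 => 0
  | k + 1 => S c k + c k

/-- Running minimum of partial sums. -/
def M (c : ℕ → ℤ) : ℕ → ℤ
  | 0 => 0
  | k + 1 => min (M c k) (S c (k + 1))

section Cycle

variable {p n : ℕ} {c : ℕ → ℤ}

lemma S_eq_sum (c : ℕ → ℤ) (k : ℕ) : S c k = ∑ i ∈ range k, c i := by
  induction k with
  | zero => simp [S]
  | succ k ih => rw [S, ih, Finset.sum_range_succ]

lemma S_add (c : ℕ → ℤ) (r j : ℕ) : S c (r + j) = S c r + ∑ i ∈ range j, c (r + i) := by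
  induction j with
  | zero => simp
  | succ j ih =>
      rw [← Nat.add_assoc, S, ih, Finset.sum_range_succ]
      ring

lemma S_period (hper : ∀ i, c (i + p) = c i)
    (hsum : (∑ i ∈ range p, c i) = -(n : ℤ)) (k : ℕ) :
    S c (k + p) = S c k - n := by
  induction k with
  | zero => simp [S_eq_sum, hsum]
  | succ k ih =>
      have h1 : k + 1 + p = (k + p) + 1 := by omega
      rw [h1, S, ih, hper k, S]
      ring

lemma M_le (c : ℕ → ℤ) : ∀ t, ∀ k ≤ t, M c t ≤ S c k := by
  intro t
  induction t with
  | zero => intro k hk; interval_cases k; simp [M, S]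
  | succ t ih =>
      intro k hk
      rcases Nat.lt_or_ge k (t + 1) with h | h
      · exact le_trans (min_le_left _ _) (ih k (by omega))
      · have : k = t + 1 := by omega
        subst this
        exact min_le_right _ _

lemma M_exists (c : ℕ → ℤ) : ∀ t, ∃ k ≤ t, M c t = S c k := by
  intro t
  induction t with
  | zero => exact ⟨0, le_refl _, by simp [M, S]⟩
  | succ t ih =>
      obtain ⟨k, hk, hMk⟩ := ih
      rcases le_or_gt (M c t) (S c (t + 1)) with h | h
      · exact ⟨k, by omega, by rw [M, min_eq_left h, hMk]⟩
      · exact ⟨t + 1, le_refl _, by rw [M, min_eq_right h.le]⟩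

lemma M_step (hge : ∀ i, -1 ≤ c i) (t : ℕ) :
    M c (t + 1) = M c t - (if S c (t + 1) < M c t then 1 else 0) := by
  have h1 : M c t ≤ S c t := M_le c t t le_rfl
  have h2 : S c t - 1 ≤ S c (t + 1) := by
    have := hge t; rw [S]; linarith
  rw [M]
  split_ifs with h
  · have : M c t - 1 ≤ S c (t + 1) := by linarith
    omega
  · push_neg at h
    rw [min_eq_left h]
    ring

lemma count_records (hge : ∀ i, -1 ≤ c i) (a m : ℕ) :
    (((Finset.Ico a (a + m)).filter (fun t => S c (t + 1) < M c t)).card : ℤ)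
      = M c a - M c (a + m) := by
  induction m with
  | zero => simp
  | succ m ih =>
      have h1 : a + (m + 1) = (a + m) + 1 := by omega
      have h2 : Finset.Ico a (a + m + 1) = insert (a + m) (Finset.Ico a (a + m)) := by
        rw [Finset.Ico_add_one_right_eq_Icc, ← Finset.Ico_insert_right (by omega)]
      rw [h1, h2, Finset.filter_insert, M_step hge (a + m)]
      split_ifs with h
      · rw [Finset.card_insert_of_notMem (by simp)]
        push_cast
        omega
      · rw [ih]; ring

end Cycle

end VEP
namespace VEP
open Finset

section Cycle2

variable {p n : ℕ} {c : ℕ → ℤ}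

lemma M_shift (hp : 1 ≤ p) (hn : 1 ≤ n) (hper : ∀ i, c (i + p) = c i)
    (hsum : (∑ i ∈ range p, c i) = -(n : ℤ)) :
    M c (p - 1 + p) = M c (p - 1) - n := by
  apply le_antisymm
  · obtain ⟨k0, hk0, hM0⟩ := M_exists c (p - 1)
    have := M_le c (p - 1 + p) (k0 + p) (by omega)
    rw [S_period hper hsum k0, ← hM0] at this
    linarith
  · obtain ⟨k1, hk1, hM1⟩ := M_exists c (p - 1 + p)
    rw [hM1]
    rcases Nat.lt_or_ge k1 p with h | h
    · have := M_le c (p - 1) k1 (by omega)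
      have hn' : (0 : ℤ) ≤ n := by positivity
      linarith
    · have hk : k1 - p + p = k1 := by omega
      have hS : S c k1 = S c (k1 - p) - n := by
        have h2 := S_period hper hsum (k1 - p)
        rw [hk] at h2
        exact h2
      have := M_le c (p - 1) (k1 - p) (by omega)
      linarith

/-- A rotation start `r < p` is "good" iff `r + p` is a strict record minimum. -/
lemma record_iff (hp : 1 ≤ p) (hn : 1 ≤ n) (hper : ∀ i, c (i + p) = c i)
    (hsum : (∑ i ∈ range p, c i) = -(n : ℤ)) {r : ℕ} (hr : r < p) :
    (S c (r + p) < M c (r + (p - 1)))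
      ↔ (∀ j, 1 ≤ j → j ≤ p - 1 → S c (r + p) < S c (r + j)) := by
  constructor
  · intro h j hj1 hj2
    exact lt_of_lt_of_le h (M_le c _ (r + j) (by omega))
  · intro h
    obtain ⟨k1, hk1, hM1⟩ := M_exists c (r + (p - 1))
    rw [hM1]
    -- show S c (r+p) < S c k for every k < r + p
    have key : ∀ k, k < r + p → S c (r + p) < S c k := by
      intro k hk
      rcases Nat.lt_or_ge r k with h1 | h1
      · -- k > r : use hypothesis with j = k - r
        have hkr : k = r + (k - r) := by omega
        rw [hkr]
        exact h (k - r) (by omega) (by omega)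
      · -- k ≤ r : S c k = S c (k + p) + n
        have hS : S c (k + p) = S c k - n := S_period hper hsum k
        rcases Nat.eq_or_lt_of_le h1 with h2 | h2
        · subst h2
          have hn' : (1 : ℤ) ≤ n := by exact_mod_cast hn
          linarith
        · have : S c (r + p) < S c (k + p) := by
            have hkr : k + p = r + (k + p - r) := by omega
            rw [hkr]
            exact h (k + p - r) (by omega) (by omega)
          have hn' : (0 : ℤ) ≤ n := by positivity
          linarith
    exact key k1 (by omega)

/-- The cycle lemma: exactly `n` of the `p` rotations are good. -/
lemma cycle_core [DecidablePred (fun r =>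
      ∀ j, 1 ≤ j → j ≤ p - 1 → -(n : ℤ) < ∑ i ∈ Finset.range j, c (r + i))]
    (hp : 1 ≤ p) (hn : 1 ≤ n) (hper : ∀ i, c (i + p) = c i)
    (hge : ∀ i, -1 ≤ c i) (hsum : (∑ i ∈ range p, c i) = -(n : ℤ)) :
    ((range p).filter
        (fun r => ∀ j, 1 ≤ j → j ≤ p - 1 → -(n : ℤ) < ∑ i ∈ range j, c (r + i))).card
      = n := by
  classical
  have hcard : ((range p).filter
      (fun r => ∀ j, 1 ≤ j → j ≤ p - 1 → -(n : ℤ) < ∑ i ∈ range j, c (r + i))).card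
      = ((Finset.Ico (p - 1) (p - 1 + p)).filter (fun t => S c (t + 1) < M c t)).card := by
    apply Finset.card_bij (fun r _ => r + (p - 1))
    · intro r hr
      simp only [Finset.mem_filter, Finset.mem_range] at hr
      simp only [Finset.mem_filter, Finset.mem_Ico]
      have hr1 : r + (p - 1) + 1 = r + p := by omega
      refine ⟨⟨by omega, by omega⟩, ?_⟩
      rw [hr1, record_iff hp hn hper hsum hr.1]
      intro j hj1 hj2
      have := hr.2 j hj1 hj2
      have hSp : S c (r + p) = S c r - n := S_period hper hsum r
      have hSj : S c (r + j) = S c r + ∑ i ∈ range j, c (r + i) := S_add c r j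
      linarith
    · intro a ha b hb h
      omega
    · intro t ht
      simp only [Finset.mem_filter, Finset.mem_Ico] at ht
      refine ⟨t - (p - 1), ?_, by omega⟩
      simp only [Finset.mem_filter, Finset.mem_range]
      set r := t - (p - 1) with hrdef
      have hrp : r < p := by omega
      have ht1 : t + 1 = r + p := by omega
      have ht2 : t = r + (p - 1) := by omega
      rw [ht1, ht2] at ht
      refine ⟨hrp, ?_⟩
      intro j hj1 hj2
      have := (record_iff hp hn hper hsum hrp).1 ht.2 j hj1 hj2
      have hSp : S c (r + p) = S c r - n := S_period hper hsum r
      have hSj : S c (r + j) = S c r + ∑ i ∈ range j, c (r + i) := S_add c r j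
      linarith
  rw [hcard]
  have := count_records hge (p - 1) p
  rw [M_shift hp hn hper hsum] at this
  omega

end Cycle2

end VEP
namespace VEP
open Finset

section PermCount

variable {p n : ℕ}

/-- The goodness predicate on permutations from the theorem statement. -/
def Good (p n : ℕ) (ℓ : Fin p → ℕ) (π : Equiv.Perm (Fin p)) : Prop :=
  ∀ k : ℕ, 1 ≤ k → k ≤ p - 1 →
    ((k : ℤ) - (n : ℤ) < ∑ i : Fin p, (if (i : ℕ) < k then (ℓ (π i) : ℤ) else 0))

lemma good_rotations [NeZero p] (hp : 1 ≤ p) (hn : 1 ≤ n) (ℓ : Fin p → ℕ)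
    (hsum : (∑ i : Fin p, (ℓ i : ℤ)) = (p : ℤ) - (n : ℤ)) (π : Equiv.Perm (Fin p))
    [DecidablePred fun r : Fin p => Good p n ℓ (π * Equiv.addRight r)] :
    (Finset.univ.filter (fun r : Fin p => Good p n ℓ (π * Equiv.addRight r))).card = n := by
  have hp0 : 0 < p := hp
  set c : ℕ → ℤ := fun i => (ℓ (π ⟨i % p, Nat.mod_lt i hp0⟩) : ℤ) - 1 with hc
  have hper : ∀ i, c (i + p) = c i := by
    intro i
    simp only [hc, Nat.add_mod_right]
  have hge : ∀ i, -1 ≤ c i := by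
    intro i
    have : (0 : ℤ) ≤ (ℓ (π ⟨i % p, Nat.mod_lt i hp0⟩) : ℤ) := by positivity
    simp only [hc]
    linarith
  have hsum' : (∑ i ∈ range p, c i) = -(n : ℤ) := by
    have h1 : (∑ i ∈ range p, c i) = (∑ i ∈ range p,
        (ℓ (π ⟨i % p, Nat.mod_lt i hp0⟩) : ℤ)) - p := by
      rw [Finset.sum_sub_distrib]
      simp
    have h2 : (∑ i ∈ range p, (ℓ (π ⟨i % p, Nat.mod_lt i hp0⟩) : ℤ))
        = ∑ i : Fin p, (ℓ (π i) : ℤ) := by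
      rw [← Fin.sum_univ_eq_sum_range (fun i => (ℓ (π ⟨i % p, Nat.mod_lt i hp0⟩) : ℤ)) p]
      apply Finset.sum_congr rfl
      intro i _
      have h : (⟨(i : ℕ) % p, Nat.mod_lt _ hp0⟩ : Fin p) = i :=
        Fin.ext (Nat.mod_eq_of_lt i.isLt)
      rw [h]
    have h3 : ∑ i : Fin p, (ℓ (π i) : ℤ) = ∑ i : Fin p, (ℓ i : ℤ) :=
      Equiv.sum_comp π fun i => (ℓ i : ℤ)
    rw [h1, h2, h3, hsum]
    ring
  -- rewrite goodness of the rotated permutation in terms of `c`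
  have hgood : ∀ r : Fin p, Good p n ℓ (π * Equiv.addRight r)
      ↔ ∀ j, 1 ≤ j → j ≤ p - 1 → -(n : ℤ) < ∑ i ∈ Finset.range j, c ((r : ℕ) + i) := by
    intro r
    have hterm : ∀ k : ℕ, k ≤ p →
        (∑ i : Fin p, (if (i : ℕ) < k then (ℓ ((π * Equiv.addRight r) i) : ℤ) else 0))
          = (∑ i ∈ Finset.range k, c ((r : ℕ) + i)) + k := by
      intro k hk
      have hG : ∀ i : Fin p,
          (if (i : ℕ) < k then (ℓ ((π * Equiv.addRight r) i) : ℤ) else 0)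
            = (fun m => if m < k then c ((r : ℕ) + m) + 1 else 0) (i : ℕ) := by
        intro i
        simp only
        split_ifs with h
        · have hval : ((r : ℕ) + (i : ℕ)) % p = ((i + r : Fin p) : ℕ) := by
            rw [Fin.val_add, Nat.add_comm]
          have : (⟨((r : ℕ) + (i : ℕ)) % p, Nat.mod_lt _ hp0⟩ : Fin p) = i + r := by
            ext; exact hval
          simp only [hc, this]
          simp [Equiv.Perm.mul_apply, Equiv.coe_addRight]
        · rfl
      calc (∑ i : Fin p, (if (i : ℕ) < k then (ℓ ((π * Equiv.addRight r) i) : ℤ) else 0))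
          = ∑ i : Fin p, (fun m => if m < k then c ((r : ℕ) + m) + 1 else 0) (i : ℕ) :=
            Finset.sum_congr rfl fun i _ => hG i
        _ = ∑ m ∈ Finset.range p, (if m < k then c ((r : ℕ) + m) + 1 else 0) :=
            Fin.sum_univ_eq_sum_range (fun m => if m < k then c ((r : ℕ) + m) + 1 else 0) p
        _ = ∑ m ∈ Finset.range k, (c ((r : ℕ) + m) + 1) := by
            rw [← Finset.sum_filter]
            congr 1
            ext m
            simp only [Finset.mem_filter, Finset.mem_range]
            omega
        _ = (∑ i ∈ Finset.range k, c ((r : ℕ) + i)) + k := by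
            rw [Finset.sum_add_distrib]
            simp
    constructor
    · intro hg j hj1 hj2
      have := hg j hj1 hj2
      rw [hterm j (by omega)] at this
      linarith
    · intro hg k hk1 hk2
      have := hg k hk1 hk2
      rw [hterm k (by omega)]
      linarith
  letI : DecidablePred (fun r : ℕ =>
      ∀ j, 1 ≤ j → j ≤ p - 1 → -(n : ℤ) < ∑ i ∈ Finset.range j, c (r + i)) :=
    fun r => Nat.decidableLoHiLe _ _ _
  have hbij : (Finset.univ.filter (fun r : Fin p => Good p n ℓ (π * Equiv.addRight r))).card
      = ((range p).filter
          (fun r => ∀ j, 1 ≤ j → j ≤ p - 1 → -(n : ℤ) < ∑ i ∈ Finset.range j, c (r + i))).card := by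
    refine Finset.card_bij (fun (r : Fin p) (_ : r ∈ Finset.univ.filter
        (fun r : Fin p => Good p n ℓ (π * Equiv.addRight r))) => (r : ℕ)) ?_ ?_ ?_
    · intro r hr
      simp only [Finset.mem_filter, Finset.mem_univ, true_and] at hr
      simp only [Finset.mem_filter, Finset.mem_range]
      exact ⟨r.isLt, (hgood r).1 hr⟩
    · intro a _ b _ h
      exact Fin.ext h
    · intro m hm
      simp only [Finset.mem_filter, Finset.mem_range] at hm
      refine ⟨⟨m, hm.1⟩, ?_, rfl⟩
      simp only [Finset.mem_filter, Finset.mem_univ, true_and]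
      exact (hgood ⟨m, hm.1⟩).2 hm.2
  rw [hbij]
  exact cycle_core hp hn hper hge hsum'

end PermCount

end VEP
namespace VEP
open Finset

/-- Counting plane forests with `n` trees and prescribed numbers of children via the orderings
of the child-number sequence whose proper partial sums of `(ℓ_{π(i)} − 1)` stay above `−n`:
there are exactly `n·(p−1)!` such orderings. -/
theorem count_forest_orderings (p n : ℕ) (hp : 1 ≤ p) (hn : 1 ≤ n) (ℓ : Fin p → ℕ)
    (hsum : (∑ i : Fin p, (ℓ i : ℤ)) = (p : ℤ) - (n : ℤ)) :
    Nat.card {π : Equiv.Perm (Fin p) //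
        ∀ k : ℕ, 1 ≤ k → k ≤ p - 1 →
          ((k : ℤ) - (n : ℤ)
            < ∑ i : Fin p, (if (i : ℕ) < k then (ℓ (π i) : ℤ) else 0))}
      = n * Nat.factorial (p - 1) := by
  classical
  haveI : NeZero p := ⟨by omega⟩
  have hcard : Nat.card {π : Equiv.Perm (Fin p) //
      ∀ k : ℕ, 1 ≤ k → k ≤ p - 1 →
        ((k : ℤ) - (n : ℤ)
          < ∑ i : Fin p, (if (i : ℕ) < k then (ℓ (π i) : ℤ) else 0))}
      = (Finset.univ.filter (Good p n ℓ)).card := by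
    have h1 : Nat.card {π : Equiv.Perm (Fin p) // Good p n ℓ π}
        = (Finset.univ.filter (Good p n ℓ)).card := by
      rw [Nat.card_eq_fintype_card, Fintype.card_subtype]
    exact h1
  rw [hcard]
  -- double counting
  have hrow : ∀ r : Fin p,
      (Finset.univ.filter (fun π => Good p n ℓ (π * Equiv.addRight r))).card
        = (Finset.univ.filter (Good p n ℓ)).card := by
    intro r
    refine Finset.card_bij' (fun π _ => π * Equiv.addRight r)
      (fun π _ => π * (Equiv.addRight r)⁻¹) ?_ ?_ ?_ ?_
    · intro π hπ
      simp only [Finset.mem_filter, Finset.mem_univ, true_and] at hπ ⊢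
      exact hπ
    · intro π hπ
      simp only [Finset.mem_filter, Finset.mem_univ, true_and] at hπ ⊢
      have he : π * (Equiv.addRight r)⁻¹ * Equiv.addRight r = π := by group
      rw [he]
      exact hπ
    · intro π _
      group
    · intro π _
      group
  have hcol : ∀ π : Equiv.Perm (Fin p),
      (Finset.univ.filter (fun r : Fin p => Good p n ℓ (π * Equiv.addRight r))).card = n :=
    fun π => good_rotations hp hn ℓ hsum π
  have hswap : ∑ r : Fin p,
        (Finset.univ.filter (fun π => Good p n ℓ (π * Equiv.addRight r))).card
      = ∑ π : Equiv.Perm (Fin p),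
        (Finset.univ.filter (fun r : Fin p => Good p n ℓ (π * Equiv.addRight r))).card := by
    simp_rw [Finset.card_filter]
    exact Finset.sum_comm
  have hL : ∑ r : Fin p,
      (Finset.univ.filter (fun π => Good p n ℓ (π * Equiv.addRight r))).card
      = p * (Finset.univ.filter (Good p n ℓ)).card := by
    simp [hrow, Finset.sum_const, Fintype.card_fin, mul_comm]
  have hR : ∑ π : Equiv.Perm (Fin p),
      (Finset.univ.filter (fun r : Fin p => Good p n ℓ (π * Equiv.addRight r))).card
      = Nat.factorial p * n := by
    simp [hcol, Finset.sum_const, Fintype.card_perm, Fintype.card_fin, mul_comm]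
  have hmain : p * (Finset.univ.filter (Good p n ℓ)).card = p * (n * Nat.factorial (p - 1)) := by
    rw [← hL, hswap, hR]
    have hfac : Nat.factorial p = p * Nat.factorial (p - 1) := by
      conv_lhs => rw [show p = (p - 1) + 1 by omega]
      rw [Nat.factorial_succ]
      congr 1
      omega
    rw [hfac]
    ring
  exact Nat.eq_of_mul_eq_mul_left (by omega) hmain

end VEP
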